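/- Let 𝔏 = ⊕_{m∈ℤ} 𝔏_m be a graded Lie algebra over ℂ with a bilinear form B on its local part satisfying conditions (i)–(v), whose local part realizes the pentad of Cartan type P(r,n;A,D,Γ), and suppose the Cartan matrix C = C(A,D,Γ) = (C_{ij}) is invertible. Then 𝔏 is the direct sum of Lie algebra ideals 𝔏 = Z ⊕ 𝔏', where: Z is the (r−n)-dimensional subspace {x ∈ 𝔏₀ : [x, 𝔏₁] = 0 and [x, 𝔏_{−1}] = 0}, which is central in 𝔏; and 𝔏' is the Lie subalgebra generated by 𝔏₁ ∪ 𝔏_{−1}, which is a graded ideal with degree-0 component span{h₁,…,h_n}, is generated by its local part, is transitive, and satisfies [h_i, e_j] = C_{ij} e_j, [h_i, f_j] = −C_{ij} f_j, [e_i, f_j] = δ_{ij} h_i for all 1 ≤ i, j ≤ n (so 𝔏' is a transitive graded Lie algebra whose local part is the contragredient local Lie algebra of the Cartan matrix C(A,D,Γ)). -/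

import Mathlib

noncomputable section

open Matrix

/-- A graded Lie algebra `L = ⊕ G i` together with a bilinear form `B` on its local part
(encoded as a bilinear form on `L`, only its restriction to the local part matters),
satisfying conditions (i)–(v) of the paper. -/
def GoodGrading (L : Type) [LieRing L] [LieAlgebra ℂ L] (G : ℤ → Submodule ℂ L)
    (B : LinearMap.BilinForm ℂ L) : Prop :=
  iSupIndep G ∧ (⨆ i, G i) = ⊤ ∧
  (∀ i j : ℤ, ∀ x ∈ G i, ∀ y ∈ G j, ⁅x, y⁆ ∈ G (i + j)) ∧
  (LieSubalgebra.lieSpan ℂ L ((G (-1) : Set L) ∪ (G 0 : Set L) ∪ (G 1 : Set L)) = ⊤) ∧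
  (∀ i : ℤ, 1 ≤ i →
    G (i + 1) = Submodule.span ℂ {z : L | ∃ x ∈ G 1, ∃ y ∈ G i, z = ⁅x, y⁆} ∧
    G (-(i + 1)) = Submodule.span ℂ {z : L | ∃ x ∈ G (-1), ∃ y ∈ G (-i), z = ⁅x, y⁆}) ∧
  (∀ i : ℤ, (i = 0 ∨ i = 1) →
    (∀ x ∈ G i, (∀ y ∈ G (-i), B x y = 0) → x = 0) ∧
    (∀ y ∈ G (-i), (∀ x ∈ G i, B x y = 0) → y = 0) ∧
    (∀ a ∈ G 0, ∀ x ∈ G i, ∀ y ∈ G (-i), B ⁅a, x⁆ y + B x ⁅a, y⁆ = 0)) ∧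
  (∀ a ∈ G 0, ∀ x ∈ G 1, ∀ y ∈ G (-1), B a ⁅x, y⁆ = B ⁅a, x⁆ y) ∧
  (∀ i : ℤ, 2 ≤ i → ∀ x ∈ G i, (∀ y ∈ G (-1), ⁅x, y⁆ = 0) → x = 0) ∧
  (∀ i : ℤ, i ≤ -2 → ∀ x ∈ G i, (∀ y ∈ G 1, ⁅x, y⁆ = 0) → x = 0)

/-- The local part of the graded Lie algebra `L` realizes the pentad of Cartan type
`P(r,n;A,D,Γ)` (with `Γ = diagonal γ`) via the bases `ε`, `e`, `f`. -/
def RealizesPentad (L : Type) [LieRing L] [LieAlgebra ℂ L] (G : ℤ → Submodule ℂ L)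
    (B : LinearMap.BilinForm ℂ L) {r n : ℕ}
    (A : Matrix (Fin r) (Fin r) ℂ) (D : Matrix (Fin r) (Fin n) ℂ) (γ : Fin n → ℂ)
    (ε : Fin r → L) (e : Fin n → L) (f : Fin n → L) : Prop :=
  (LinearIndependent ℂ ε ∧ Submodule.span ℂ (Set.range ε) = G 0) ∧
  (LinearIndependent ℂ e ∧ Submodule.span ℂ (Set.range e) = G 1) ∧
  (LinearIndependent ℂ f ∧ Submodule.span ℂ (Set.range f) = G (-1)) ∧
  (∀ x ∈ G 0, ∀ y ∈ G 0, ⁅x, y⁆ = 0) ∧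
  (∀ (i : Fin r) (j : Fin n), ⁅ε i, e j⁆ = D i j • e j) ∧
  (∀ (i : Fin r) (j : Fin n), ⁅ε i, f j⁆ = (-D i j) • f j) ∧
  (∀ i j : Fin n, ⁅e i, f j⁆
    = if i = j then ∑ k, (Aᵀ * D * Matrix.diagonal γ) k i • ε k else 0) ∧
  (∀ i j : Fin r, B (ε i) (ε j) = (A⁻¹)ᵀ i j) ∧
  (∀ i j : Fin n, B (e i) (f j) = if i = j then γ i else 0) ∧
  (∀ i ∈ ({-1, 0, 1} : Set ℤ), ∀ j ∈ ({-1, 0, 1} : Set ℤ), i + j ≠ 0 →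
    ∀ x ∈ G i, ∀ y ∈ G j, B x y = 0)

/-- The Cartan matrix `C(A, D, Γ) = Γ · ᵗD · A · D`. -/
def cartanC {r n : ℕ} (A : Matrix (Fin r) (Fin r) ℂ) (D : Matrix (Fin r) (Fin n) ℂ)
    (γ : Fin n → ℂ) : Matrix (Fin n) (Fin n) ℂ :=
  Matrix.diagonal γ * Dᵀ * A * D

/-- `Z = {x ∈ G0 : [x, G1] = 0 and [x, Gm1] = 0}` as a submodule. -/
def zCenter (L : Type) [LieRing L] [LieAlgebra ℂ L]
    (G0 G1 Gm1 : Submodule ℂ L) : Submodule ℂ L where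
  carrier := {x | x ∈ G0 ∧ (∀ y ∈ G1, ⁅x, y⁆ = 0) ∧ (∀ y ∈ Gm1, ⁅x, y⁆ = 0)}
  add_mem' := by
    rintro a b ⟨ha0, ha1, ham⟩ ⟨hb0, hb1, hbm⟩
    exact ⟨G0.add_mem ha0 hb0,
      fun y hy => by rw [add_lie, ha1 y hy, hb1 y hy, add_zero],
      fun y hy => by rw [add_lie, ham y hy, hbm y hy, add_zero]⟩
  zero_mem' := ⟨G0.zero_mem, fun y _ => zero_lie y, fun y _ => zero_lie y⟩
  smul_mem' := by
    rintro c a ⟨ha0, ha1, ham⟩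
    exact ⟨G0.smul_mem c ha0,
      fun y hy => by rw [smul_lie, ha1 y hy, smul_zero],
      fun y hy => by rw [smul_lie, ham y hy, smul_zero]⟩


section Aux
set_option linter.unusedSectionVars false
variable {L : Type} [LieRing L] [LieAlgebra ℂ L]

lemma sum_lie' {ι : Type*} (s : Finset ι) (g : ι → L) (y : L) :
    ⁅∑ i ∈ s, g i, y⁆ = ∑ i ∈ s, ⁅g i, y⁆ :=
  map_sum (AddMonoidHom.mk' (fun x => ⁅x, y⁆) (fun a b => add_lie a b y)) g s

lemma span_lie_left {s : Set L} {y : L} {H : Submodule ℂ L}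
    (h : ∀ x ∈ s, ⁅x, y⁆ ∈ H) : ∀ x ∈ Submodule.span ℂ s, ⁅x, y⁆ ∈ H := by
  intro x hx
  induction hx using Submodule.span_induction with
  | mem a ha => exact h a ha
  | zero => simp only [zero_lie]; exact H.zero_mem
  | add a b _ _ ha hb => rw [add_lie]; exact H.add_mem ha hb
  | smul c a _ ha => rw [smul_lie]; exact H.smul_mem c ha

lemma span_lie_right {s : Set L} {y : L} {H : Submodule ℂ L}
    (h : ∀ x ∈ s, ⁅y, x⁆ ∈ H) : ∀ x ∈ Submodule.span ℂ s, ⁅y, x⁆ ∈ H := by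
  intro x hx
  induction hx using Submodule.span_induction with
  | mem a ha => exact h a ha
  | zero => simp only [lie_zero]; exact H.zero_mem
  | add a b _ _ ha hb => rw [lie_add]; exact H.add_mem ha hb
  | smul c a _ ha => rw [lie_smul]; exact H.smul_mem c ha

lemma span_lie_span {s t : Set L} {H : Submodule ℂ L}
    (h : ∀ x ∈ s, ∀ y ∈ t, ⁅x, y⁆ ∈ H) :
    ∀ x ∈ Submodule.span ℂ s, ∀ y ∈ Submodule.span ℂ t, ⁅x, y⁆ ∈ H := by
  intro x hx y hy
  refine span_lie_left (s := s) (fun a ha => ?_) x hx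
  exact span_lie_right (fun b hb => h a ha b hb) y hy

/-- The centralizer of an element as a Lie subalgebra. -/
def centralizerOf (z : L) : LieSubalgebra ℂ L where
  carrier := {x | ⁅z, x⁆ = 0}
  add_mem' := by intro a b ha hb; simp_all [lie_add]
  zero_mem' := by simp
  smul_mem' := by intro c a ha; simp_all [lie_smul]
  lie_mem' := by
    intro a b ha hb
    simp only [Set.mem_setOf_eq] at *
    rw [leibniz_lie, ha, hb]; simp

end Aux

/-- A graded Lie algebra satisfying (i)–(v) whose local part realizes a
regular pentad of Cartan type `P(r,n;A,D,Γ)` is the direct sum of its `(r-n)`-dimensional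
center `Z` and of the ideal `𝔏'` generated by `𝔏₁ ∪ 𝔏₋₁`, which is a transitive graded
Lie algebra whose local part is the contragredient local Lie algebra of the Cartan matrix
`C(A,D,Γ)`. -/
theorem stmt_14
    (L : Type) [LieRing L] [LieAlgebra ℂ L]
    (G : ℤ → Submodule ℂ L)
    (B : LinearMap.BilinForm ℂ L)
    (hG : GoodGrading L G B)
    (r n : ℕ) (hr : 0 < r) (hn : 0 < n)
    (A : Matrix (Fin r) (Fin r) ℂ) (hA : IsUnit A.det)
    (D : Matrix (Fin r) (Fin n) ℂ)
    (γ : Fin n → ℂ) (hγ : ∀ j, γ j ≠ 0)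
    (ε : Fin r → L) (e : Fin n → L) (f : Fin n → L)
    (hreal : RealizesPentad L G B A D γ ε e f)
    -- regularity: the Cartan matrix is invertible
    (hC : IsUnit (cartanC A D γ).det) :
    letI hL : Fin n → L := fun i => ∑ k, (Aᵀ * D * Matrix.diagonal γ) k i • ε k
    letI Z : Submodule ℂ L := zCenter L (G 0) (G 1) (G (-1))
    letI L' : LieSubalgebra ℂ L :=
      LieSubalgebra.lieSpan ℂ L ((G 1 : Set L) ∪ (G (-1) : Set L))
    -- Z is the (r-n)-dimensional center part
    Module.finrank ℂ ↥Z = r - n ∧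
    (∀ z ∈ Z, ∀ x : L, ⁅z, x⁆ = 0) ∧
    -- 𝔏 = Z ⊕ 𝔏', a direct sum of ideals
    Z ⊓ L'.toSubmodule = ⊥ ∧
    Z ⊔ L'.toSubmodule = ⊤ ∧
    (∀ x : L, ∀ z ∈ Z, ⁅x, z⁆ ∈ Z) ∧
    (∀ x : L, ∀ y ∈ L', ⁅x, y⁆ ∈ L') ∧
    -- 𝔏' is graded with degree-0 component span{h₁, …, h_n}
    L'.toSubmodule ⊓ G 0 = Submodule.span ℂ (Set.range hL) ∧
    (⨆ i : ℤ, (L'.toSubmodule ⊓ G i)) = L'.toSubmodule ∧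
    -- 𝔏' is generated by its local part
    LieSubalgebra.lieSpan ℂ L (((L'.toSubmodule ⊓ G (-1) : Submodule ℂ L) : Set L)
        ∪ ((L'.toSubmodule ⊓ G 0 : Submodule ℂ L) : Set L)
        ∪ ((L'.toSubmodule ⊓ G 1 : Submodule ℂ L) : Set L)) = L' ∧
    -- 𝔏' is transitive (with components 𝔏'_i = 𝔏' ⊓ G i)
    (∀ i : ℤ, 0 ≤ i → ∀ x ∈ L'.toSubmodule ⊓ G i,
      (∀ y ∈ L'.toSubmodule ⊓ G (-1), ⁅x, y⁆ = 0) → x = 0) ∧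
    (∀ i : ℤ, i ≤ 0 → ∀ x ∈ L'.toSubmodule ⊓ G i,
      (∀ y ∈ L'.toSubmodule ⊓ G 1, ⁅x, y⁆ = 0) → x = 0) ∧
    -- the local part of 𝔏' is the contragredient local Lie algebra of C(A,D,Γ)
    (∀ (i : Fin n) (j : Fin n), ⁅hL i, e j⁆ = cartanC A D γ i j • e j) ∧
    (∀ (i : Fin n) (j : Fin n), ⁅hL i, f j⁆ = (-cartanC A D γ i j) • f j) ∧
    (∀ i j : Fin n, ⁅e i, f j⁆ = if i = j then hL i else 0) := by
  obtain ⟨hind, hsup, hgr, hgen, hcond1, -, -, hiv, hv⟩ := hG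
  obtain ⟨⟨hεli, hε⟩, ⟨heli, he⟩, ⟨hfli, hf⟩, hab, hεe, hεf, hef, -, -, -⟩ := hreal
  set M : Matrix (Fin r) (Fin n) ℂ := Aᵀ * D * Matrix.diagonal γ with hMdef
  -- memberships of basis vectors
  have hεm : ∀ i, ε i ∈ G 0 := fun i => hε ▸ Submodule.subset_span ⟨i, rfl⟩
  have hem : ∀ j, e j ∈ G 1 := fun j => he ▸ Submodule.subset_span ⟨j, rfl⟩
  have hfm : ∀ j, f j ∈ G (-1) := fun j => hf ▸ Submodule.subset_span ⟨j, rfl⟩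
  set hLf : Fin n → L := fun i => ∑ k, M k i • ε k with hLdef
  have hLm : ∀ i, hLf i ∈ G 0 := fun i =>
    Submodule.sum_mem _ fun k _ => Submodule.smul_mem _ _ (hεm k)
  have hLef : ∀ i, hLf i = ⁅e i, f i⁆ := fun i => by rw [hef i i, if_pos rfl]
  -- matrix identities
  have hMtD : Mᵀ * D = cartanC A D γ := by
    rw [hMdef, cartanC]
    simp [Matrix.transpose_mul, Matrix.mul_assoc]
  have hCentry : ∀ i j, ∑ k, M k i * D k j = cartanC A D γ i j := by
    intro i j
    rw [← hMtD, Matrix.mul_apply]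
    simp [Matrix.transpose_apply]
  have hCtr : (cartanC A D γ)ᵀ = Dᵀ * M := by
    rw [hMdef, cartanC]
    simp [Matrix.transpose_mul, Matrix.mul_assoc]
  -- injectivity facts
  have hCt : IsUnit (cartanC A D γ)ᵀ.det := by rwa [Matrix.det_transpose]
  have hCinj : ∀ c : Fin n → ℂ, (cartanC A D γ)ᵀ *ᵥ c = 0 → c = 0 := by
    intro c hc
    calc c = 1 *ᵥ c := (Matrix.one_mulVec c).symm
    _ = ((cartanC A D γ)ᵀ⁻¹ * (cartanC A D γ)ᵀ) *ᵥ c := by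
        rw [Matrix.nonsing_inv_mul _ hCt]
    _ = (cartanC A D γ)ᵀ⁻¹ *ᵥ ((cartanC A D γ)ᵀ *ᵥ c) := (Matrix.mulVec_mulVec c _ _).symm
    _ = 0 := by rw [hc, Matrix.mulVec_zero]
  have hDinj : ∀ v : Fin n → ℂ, D *ᵥ v = 0 → v = 0 := by
    intro v hv
    have h1 : cartanC A D γ *ᵥ v = 0 := by
      have : cartanC A D γ = (Matrix.diagonal γ * Dᵀ * A) * D := by
        rw [cartanC]
      rw [this, ← Matrix.mulVec_mulVec, hv, Matrix.mulVec_zero]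
    calc v = 1 *ᵥ v := (Matrix.one_mulVec v).symm
    _ = ((cartanC A D γ)⁻¹ * cartanC A D γ) *ᵥ v := by rw [Matrix.nonsing_inv_mul _ hC]
    _ = (cartanC A D γ)⁻¹ *ᵥ (cartanC A D γ *ᵥ v) := (Matrix.mulVec_mulVec v _ _).symm
    _ = 0 := by rw [h1, Matrix.mulVec_zero]
  -- rank of D
  have hDlinInj : Function.Injective (Matrix.mulVecLin D) := by
    rw [← LinearMap.ker_eq_bot, Submodule.eq_bot_iff]
    intro v hv
    exact hDinj v hv
  have hrankD : D.rank = n := by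
    rw [Matrix.rank, LinearMap.finrank_range_of_inj hDlinInj]
    simp
  have hnr : n ≤ r := by
    have := Matrix.rank_le_card_height D
    rw [hrankD] at this; simpa using this
  -- bracket relations with hLf
  have hLe : ∀ i j, ⁅hLf i, e j⁆ = cartanC A D γ i j • e j := by
    intro i j
    rw [hLdef]
    rw [sum_lie' Finset.univ (fun k => M k i • ε k) (e j)]
    have : ∀ k ∈ Finset.univ, ⁅M k i • ε k, e j⁆ = (M k i * D k j) • e j := by
      intro k _
      rw [smul_lie, hεe k j, smul_smul]
    rw [Finset.sum_congr rfl this, ← Finset.sum_smul, hCentry]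
  have hLfr : ∀ i j, ⁅hLf i, f j⁆ = (-cartanC A D γ i j) • f j := by
    intro i j
    rw [hLdef]
    rw [sum_lie' Finset.univ (fun k => M k i • ε k) (f j)]
    have : ∀ k ∈ Finset.univ, ⁅M k i • ε k, f j⁆ = -((M k i * D k j)) • f j := by
      intro k _
      rw [smul_lie, hεf k j, smul_smul]
      ring_nf
    rw [Finset.sum_congr rfl this, ← Finset.sum_smul, Finset.sum_neg_distrib, hCentry]
  have hef' : ∀ i j, ⁅e i, f j⁆ = if i = j then hLf i else 0 := by
    intro i j
    rw [hef i j]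
  -- nonzero basis vectors
  have hLli : LinearIndependent ℂ hLf := by
    rw [Fintype.linearIndependent_iff]
    intro c hc
    have swap : ∑ i, c i • hLf i = ∑ k, (M *ᵥ c) k • ε k := by
      rw [hLdef]
      simp only [Finset.smul_sum, smul_smul]
      rw [Finset.sum_comm]
      refine Finset.sum_congr rfl fun k _ => ?_
      rw [← Finset.sum_smul]
      congr 1
      simp [Matrix.mulVec, dotProduct, mul_comm]
    have key : ∑ k, (M *ᵥ c) k • ε k = 0 := by rw [← swap]; exact hc
    have hMc : M *ᵥ c = 0 := by
      funext k
      exact (Fintype.linearIndependent_iff.1 hεli) _ key k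
    have hc0 : (cartanC A D γ)ᵀ *ᵥ c = 0 := by
      rw [hCtr, ← Matrix.mulVec_mulVec, hMc, Matrix.mulVec_zero]
    exact fun i => congrFun (hCinj c hc0) i
  have hLne : ∀ i, hLf i ≠ 0 := fun i => hLli.ne_zero i
  have hene : ∀ j, e j ≠ 0 := fun j => heli.ne_zero j
  have hfne : ∀ j, f j ≠ 0 := fun j => hfli.ne_zero j
  -- coefficient extraction
  have hmemG0 : ∀ x ∈ G 0, ∃ c : Fin r → ℂ, ∑ k, c k • ε k = x := by
    intro x hx; rw [← hε] at hx; exact (Submodule.mem_span_range_iff_exists_fun ℂ).1 hx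
  have hmemG1 : ∀ x ∈ G 1, ∃ c : Fin n → ℂ, ∑ j, c j • e j = x := by
    intro x hx; rw [← he] at hx; exact (Submodule.mem_span_range_iff_exists_fun ℂ).1 hx
  have hmemGm1 : ∀ x ∈ G (-1), ∃ c : Fin n → ℂ, ∑ j, c j • f j = x := by
    intro x hx; rw [← hf] at hx; exact (Submodule.mem_span_range_iff_exists_fun ℂ).1 hx
  -- bracket of a G0-combination with e j / f j
  have hDtv : ∀ (c : Fin r → ℂ) j, (Dᵀ *ᵥ c) j = ∑ k, c k * D k j := by
    intro c j
    simp [Matrix.mulVec, dotProduct, Matrix.transpose_apply, mul_comm]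
  have hbre : ∀ (c : Fin r → ℂ) (j : Fin n),
      ⁅∑ k, c k • ε k, e j⁆ = (∑ k, c k * D k j) • e j := by
    intro c j
    rw [sum_lie' Finset.univ (fun k => c k • ε k) (e j),
      Finset.sum_congr rfl (fun k _ => by rw [smul_lie, hεe k j, smul_smul]),
      ← Finset.sum_smul]
  have hbrf : ∀ (c : Fin r → ℂ) (j : Fin n),
      ⁅∑ k, c k • ε k, f j⁆ = (-∑ k, c k * D k j) • f j := by
    intro c j
    rw [sum_lie' Finset.univ (fun k => c k • ε k) (f j),
      Finset.sum_congr rfl (fun k _ => show ⁅c k • ε k, f j⁆ = (-(c k * D k j)) • f j by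
        rw [smul_lie, hεf k j, smul_smul]; congr 1; ring),
      ← Finset.sum_smul, Finset.sum_neg_distrib]
  -- Z is central
  have hZcentral : ∀ z ∈ zCenter L (G 0) (G 1) (G (-1)), ∀ x : L, ⁅z, x⁆ = 0 := by
    intro z hz x
    obtain ⟨hz0, hz1, hzm⟩ := hz
    have hle : LieSubalgebra.lieSpan ℂ L ((G (-1) : Set L) ∪ (G 0 : Set L) ∪ (G 1 : Set L))
        ≤ centralizerOf z := by
      rw [LieSubalgebra.lieSpan_le]
      rintro y ((hy | hy) | hy)
      · exact hzm y hy
      · exact hab z hz0 y hy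
      · exact hz1 y hy
    exact hle (hgen ▸ LieSubalgebra.mem_top x)
  -- Z as image of the kernel of Dᵀ
  let φ : (Fin r → ℂ) →ₗ[ℂ] L :=
    { toFun := fun c => ∑ k, c k • ε k
      map_add' := by intro a b; simp [add_smul, Finset.sum_add_distrib]
      map_smul' := by
        intro m a
        simp only [RingHom.id_apply, Pi.smul_apply, smul_eq_mul, smul_smul, Finset.smul_sum] }
  have hφinj : Function.Injective φ := by
    rw [← LinearMap.ker_eq_bot, Submodule.eq_bot_iff]
    intro c hc
    have hc' : ∑ k, c k • ε k = 0 := hc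
    funext k
    exact (Fintype.linearIndependent_iff.1 hεli) c hc' k
  have hZeq : (zCenter L (G 0) (G 1) (G (-1)) : Submodule ℂ L)
      = Submodule.map φ (LinearMap.ker (Matrix.mulVecLin Dᵀ)) := by
    apply le_antisymm
    · rintro x ⟨hx0, hx1, hxm⟩
      obtain ⟨c, hc⟩ := hmemG0 x hx0
      refine ⟨c, ?_, hc⟩
      have hker : ∀ j, (Dᵀ *ᵥ c) j = 0 := by
        intro j
        have hb : ⁅x, e j⁆ = 0 := hx1 _ (hem j)
        rw [← hc, hbre c j] at hb
        rcases smul_eq_zero.1 hb with h | h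
        · rw [hDtv]; exact h
        · exact absurd h (hene j)
      show Dᵀ.mulVecLin c = 0
      funext j
      exact hker j
    · rintro x ⟨c, hcker, rfl⟩
      have hker : ∀ j, ∑ k, c k * D k j = 0 := by
        intro j
        rw [← hDtv c j]
        have : Dᵀ *ᵥ c = 0 := hcker
        rw [this]; rfl
      refine ⟨show (∑ k, c k • ε k) ∈ G 0 from
        Submodule.sum_mem _ fun k _ => Submodule.smul_mem _ _ (hεm k), ?_, ?_⟩
      · intro y hy
        rw [← he] at hy
        have hg : ∀ a ∈ Set.range e, ⁅φ c, a⁆ ∈ (⊥ : Submodule ℂ L) := by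
          rintro a ⟨j, rfl⟩
          rw [Submodule.mem_bot]
          show ⁅∑ k, c k • ε k, e j⁆ = 0
          rw [hbre c j, hker j, zero_smul]
        simpa using span_lie_right hg y hy
      · intro y hy
        rw [← hf] at hy
        have hg : ∀ a ∈ Set.range f, ⁅φ c, a⁆ ∈ (⊥ : Submodule ℂ L) := by
          rintro a ⟨j, rfl⟩
          rw [Submodule.mem_bot]
          show ⁅∑ k, c k • ε k, f j⁆ = 0
          rw [hbrf c j, hker j, neg_zero, zero_smul]
        simpa using span_lie_right hg y hy
  have hkerrk : Module.finrank ℂ (LinearMap.ker (Matrix.mulVecLin Dᵀ)) = r - n := by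
    have h1 := LinearMap.finrank_range_add_finrank_ker (Matrix.mulVecLin Dᵀ)
    have h2 : Module.finrank ℂ (LinearMap.range (Matrix.mulVecLin Dᵀ)) = n := by
      have ht : Dᵀ.rank = n := by rw [Matrix.rank_transpose, hrankD]
      have hdef : Dᵀ.rank = Module.finrank ℂ (LinearMap.range (Matrix.mulVecLin Dᵀ)) := rfl
      omega
    have h3 : Module.finrank ℂ (Fin r → ℂ) = r := by simp
    omega
  have hfinZ : Module.finrank ℂ (zCenter L (G 0) (G 1) (G (-1))) = r - n := by
    rw [hZeq, ← (Submodule.equivMapOfInjective φ hφinj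
      (LinearMap.ker (Matrix.mulVecLin Dᵀ))).finrank_eq]
    exact hkerrk
  set L'a : LieSubalgebra ℂ L :=
    LieSubalgebra.lieSpan ℂ L ((G 1 : Set L) ∪ (G (-1) : Set L)) with hL'def
  set Hs : Submodule ℂ L := Submodule.span ℂ (Set.range hLf) with hHdef
  have hHsG0 : Hs ≤ G 0 := by
    rw [hHdef, Submodule.span_le]
    rintro z ⟨k, rfl⟩
    exact hLm k
  have hGpos : ∀ i : ℤ, 1 ≤ i → (G i : Set L) ⊆ L'a := by
    intro i hi
    refine Int.le_induction (motive := fun i _ => (G i : Set L) ⊆ L'a)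
      (fun x hx => LieSubalgebra.subset_lieSpan (Or.inl hx)) ?_ i hi
    intro i hi ih
    have hsp : Submodule.span ℂ {z : L | ∃ x ∈ G 1, ∃ y ∈ G i, z = ⁅x, y⁆}
        ≤ L'a.toSubmodule := by
      rw [Submodule.span_le]
      rintro z ⟨u, hu, v, hv, rfl⟩
      exact L'a.lie_mem (LieSubalgebra.subset_lieSpan (Or.inl hu)) (ih hv)
    rw [(hcond1 i hi).1]
    exact fun x hx => hsp hx
  have hGneg : ∀ i : ℤ, 1 ≤ i → (G (-i) : Set L) ⊆ L'a := by
    intro i hi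
    refine Int.le_induction (motive := fun i _ => (G (-i) : Set L) ⊆ L'a)
      (fun x hx => LieSubalgebra.subset_lieSpan (Or.inr hx)) ?_ i hi
    intro i hi ih
    have hsp : Submodule.span ℂ {z : L | ∃ x ∈ G (-1), ∃ y ∈ G (-i), z = ⁅x, y⁆}
        ≤ L'a.toSubmodule := by
      rw [Submodule.span_le]
      rintro z ⟨u, hu, v, hv, rfl⟩
      exact L'a.lie_mem (LieSubalgebra.subset_lieSpan (Or.inr hu)) (ih hv)
    rw [(hcond1 i hi).2]
    exact fun x hx => hsp hx
  have hHle : Hs ≤ L'a.toSubmodule := by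
    rw [hHdef, Submodule.span_le]
    rintro z ⟨i, rfl⟩
    rw [hLef i]
    exact L'a.lie_mem (LieSubalgebra.subset_lieSpan (Or.inl (hem i)))
      (LieSubalgebra.subset_lieSpan (Or.inr (hfm i)))
  have hbase : ∀ x ∈ G 1, ∀ y ∈ G (-1), ⁅x, y⁆ ∈ Hs := by
    rw [← he, ← hf]
    refine span_lie_span ?_
    rintro a ⟨i, rfl⟩ b ⟨j, rfl⟩
    rw [hef' i j]
    by_cases h : i = j
    · rw [if_pos h]
      exact Submodule.subset_span ⟨i, rfl⟩
    · rw [if_neg h]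
      exact Hs.zero_mem
  have hLemA : ∀ i : ℤ, 1 ≤ i → ∀ x ∈ G i, ∀ y ∈ G (-i), ⁅x, y⁆ ∈ Hs := by
    intro i hi
    refine Int.le_induction (motive := fun i _ => ∀ x ∈ G i, ∀ y ∈ G (-i), ⁅x, y⁆ ∈ Hs)
      hbase ?_ i hi
    intro i hi ih x hx y hy
    rw [(hcond1 i hi).1] at hx
    refine span_lie_left (y := y) (H := Hs) ?_ x hx
    rintro z ⟨u, hu, v, hv, rfl⟩
    rw [lie_lie]
    refine Hs.sub_mem ?_ ?_
    · have h1 : ⁅v, y⁆ ∈ G (-1) := by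
        have := hgr i (-(i+1)) v hv y hy
        rwa [show i + -(i+1) = -1 by ring] at this
      exact hbase u hu _ h1
    · have h2 : ⁅u, y⁆ ∈ G (-i) := by
        have := hgr 1 (-(i+1)) u hu y hy
        rwa [show (1 : ℤ) + -(i+1) = -i by ring] at this
      exact ih v hv _ h2
  set S : ℤ → Submodule ℂ L := fun i => if i = 0 then Hs else G i with hSdef
  have hS0 : S 0 = Hs := by simp [hSdef]
  have hSne : ∀ i : ℤ, i ≠ 0 → S i = G i := fun i hi => by simp [hSdef, hi]
  have hSle : ∀ i, S i ≤ L'a.toSubmodule := by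
    intro i
    by_cases h : i = 0
    · subst h; rw [hS0]; exact hHle
    · rw [hSne i h]
      rcases lt_or_gt_of_ne h with hlt | hgt
      · have h1 : (1:ℤ) ≤ -i := by omega
        have := hGneg (-i) h1
        rw [neg_neg] at this
        exact fun x hx => this hx
      · exact fun x hx => hGpos i (by omega) hx
  have hSG : ∀ i, S i ≤ G i := by
    intro i
    by_cases h : i = 0
    · subst h; rw [hS0]; exact hHsG0
    · rw [hSne i h]
  have hcore : ∀ (i j : ℤ), ∀ x ∈ S i, ∀ y ∈ S j, ⁅x, y⁆ ∈ (⨆ k, S k) := by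
    intro i j x hx y hy
    by_cases hi : i = 0
    · subst hi
      rw [hS0] at hx
      by_cases hj : j = 0
      · subst hj
        rw [hS0] at hy
        rw [hab x (hHsG0 hx) y (hHsG0 hy)]
        exact Submodule.zero_mem _
      · rw [hSne j hj] at hy
        have h1 : ⁅x, y⁆ ∈ G (0 + j) := hgr 0 j x (hHsG0 hx) y hy
        rw [zero_add] at h1
        have hmem : ⁅x, y⁆ ∈ S j := by rw [hSne j hj]; exact h1
        exact le_iSup S j hmem
    · rw [hSne i hi] at hx
      by_cases hj : j = 0
      · subst hj
        rw [hS0] at hy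
        have h1 : ⁅x, y⁆ ∈ G (i + 0) := hgr i 0 x hx y (hHsG0 hy)
        rw [add_zero] at h1
        have hmem : ⁅x, y⁆ ∈ S i := by rw [hSne i hi]; exact h1
        exact le_iSup S i hmem
      · rw [hSne j hj] at hy
        by_cases hij : i + j = 0
        · have hji : j = -i := by omega
          subst hji
          rcases lt_or_gt_of_ne hi with hlt | hgt
          · have h1 : (1:ℤ) ≤ -i := by omega
            have h2 : x ∈ G (-(-i)) := by rwa [neg_neg]
            have h3 := hLemA (-i) h1 y hy x h2
            have hmem : -⁅y, x⁆ ∈ S 0 := by rw [hS0]; exact Hs.neg_mem h3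
            rw [← lie_skew]
            exact le_iSup S 0 hmem
          · have h3 := hLemA i (by omega) x hx y hy
            have hmem : ⁅x, y⁆ ∈ S 0 := by rw [hS0]; exact h3
            exact le_iSup S 0 hmem
        · have h1 : ⁅x, y⁆ ∈ G (i + j) := hgr i j x hx y hy
          have hmem : ⁅x, y⁆ ∈ S (i + j) := by rw [hSne _ hij]; exact h1
          exact le_iSup S (i + j) hmem
  have hL''lie : ∀ x ∈ (⨆ k, S k), ∀ y ∈ (⨆ k, S k), ⁅x, y⁆ ∈ (⨆ k, S k) := by
    intro x hx y hy
    refine Submodule.iSup_induction S (motive := fun x => ⁅x, y⁆ ∈ ⨆ k, S k) hx ?_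
      (by show ⁅(0:L), y⁆ ∈ ⨆ k, S k; rw [zero_lie]; exact Submodule.zero_mem _)
      (fun a b ha hb => by
        show ⁅a + b, y⁆ ∈ ⨆ k, S k
        rw [add_lie]; exact Submodule.add_mem _ ha hb)
    intro i x' hx'
    show ⁅x', y⁆ ∈ ⨆ k, S k
    refine Submodule.iSup_induction S (motive := fun y => ⁅x', y⁆ ∈ ⨆ k, S k) hy ?_
      (by show ⁅x', (0:L)⁆ ∈ ⨆ k, S k; rw [lie_zero]; exact Submodule.zero_mem _)
      (fun a b ha hb => by
        show ⁅x', a + b⁆ ∈ ⨆ k, S k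
        rw [lie_add]; exact Submodule.add_mem _ ha hb)
    intro j y' hy'
    exact hcore i j x' hx' y' hy'
  let L''alg : LieSubalgebra ℂ L :=
    { (⨆ k, S k : Submodule ℂ L) with
      lie_mem' := fun {x y} hx hy => hL''lie x hx y hy }
  have hL'eq : L'a.toSubmodule = ⨆ k, S k := by
    apply le_antisymm
    · have hle : L'a ≤ L''alg := by
        rw [hL'def, LieSubalgebra.lieSpan_le]
        rintro z (hz | hz)
        · exact le_iSup S 1 (by rw [hSne 1 one_ne_zero]; exact hz)
        · exact le_iSup S (-1) (by rw [hSne (-1) (by norm_num)]; exact hz)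
      exact fun x hx => hle hx
    · exact iSup_le hSle
  have hL'G0 : L'a.toSubmodule ⊓ G 0 = Hs := by
    apply le_antisymm
    · rintro x ⟨hxL, hx0⟩
      rw [hL'eq] at hxL
      have hK : (⨆ k, S k) ≤ Hs ⊔ (⨆ k, ⨆ _ : k ≠ 0, G k) := by
        refine iSup_le fun k => ?_
        by_cases hk : k = 0
        · subst hk; rw [hS0]; exact le_sup_left
        · refine le_trans ?_ le_sup_right
          refine le_trans ?_ (le_iSup (fun k => ⨆ _ : k ≠ 0, G k) k)
          rw [hSne k hk]
          exact le_iSup (fun _ : k ≠ 0 => G k) hk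
      obtain ⟨h, hh, kk, hkk, hsum⟩ := Submodule.mem_sup.1 (hK hxL)
      have hh0 : h ∈ G 0 := hHsG0 hh
      have hkk0 : kk ∈ G 0 := by
        have : (h + kk) - h ∈ G 0 := Submodule.sub_mem _ (hsum ▸ hx0) hh0
        simpa using this
      have hzz : kk = 0 := by
        refine Submodule.disjoint_def.1 (hind 0) kk hkk0 ?_
        exact hkk
      rw [← hsum, hzz, add_zero]
      exact hh
    · exact le_inf hHle hHsG0


  -- Z ∩ Hs = 0
  have hCtv : ∀ (c : Fin n → ℂ) j, ((cartanC A D γ)ᵀ *ᵥ c) j = ∑ i, c i * cartanC A D γ i j := by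
    intro c j
    simp [Matrix.mulVec, dotProduct, Matrix.transpose_apply, mul_comm]
  have hZHbot : ∀ x, x ∈ zCenter L (G 0) (G 1) (G (-1)) → x ∈ Hs → x = 0 := by
    intro x hxZ hxH
    rw [hHdef] at hxH
    obtain ⟨c, hc⟩ := (Submodule.mem_span_range_iff_exists_fun ℂ).1 hxH
    have hcoef : ∀ j, ∑ i, c i * cartanC A D γ i j = 0 := by
      intro j
      have hb : ⁅x, e j⁆ = 0 := hxZ.2.1 _ (hem j)
      rw [← hc, sum_lie' Finset.univ (fun i => c i • hLf i) (e j),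
        Finset.sum_congr rfl (fun i _ =>
          show ⁅c i • hLf i, e j⁆ = (c i * cartanC A D γ i j) • e j by
            rw [smul_lie, hLe i j, smul_smul]),
        ← Finset.sum_smul] at hb
      rcases smul_eq_zero.1 hb with h | h
      · exact h
      · exact absurd h (hene j)
    have hctv : (cartanC A D γ)ᵀ *ᵥ c = 0 := by
      funext j
      simp only [Pi.zero_apply]
      rw [hCtv c j]
      exact hcoef j
    have hc0 := hCinj c hctv
    rw [← hc]
    refine Finset.sum_eq_zero fun i _ => ?_
    rw [show c i = 0 from congrFun hc0 i, zero_smul]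
  -- finite dimensionality and dimensions
  have hfinG0 : FiniteDimensional ℂ (G 0 : Submodule ℂ L) := by
    rw [← hε]
    exact FiniteDimensional.span_of_finite ℂ (Set.finite_range ε)
  haveI := hfinG0
  have hfinHs : FiniteDimensional ℂ (Hs : Submodule ℂ L) := by
    rw [hHdef]
    exact FiniteDimensional.span_of_finite ℂ (Set.finite_range hLf)
  haveI := hfinHs
  have hZleG0 : (zCenter L (G 0) (G 1) (G (-1))) ≤ G 0 := fun x hx => hx.1
  haveI hfinZfd : FiniteDimensional ℂ (zCenter L (G 0) (G 1) (G (-1))) :=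
    Submodule.finiteDimensional_of_le hZleG0
  have hdimG0 : Module.finrank ℂ (G 0 : Submodule ℂ L) = r := by
    rw [← hε, finrank_span_eq_card hεli]
    simp
  have hdimHs : Module.finrank ℂ (Hs : Submodule ℂ L) = n := by
    rw [hHdef, finrank_span_eq_card hLli]
    simp
  have hZHs : (zCenter L (G 0) (G 1) (G (-1))) ⊓ Hs = ⊥ := by
    rw [Submodule.eq_bot_iff]
    rintro x hx
    exact hZHbot x (Submodule.mem_inf.1 hx).1 (Submodule.mem_inf.1 hx).2
  have hG0eq : (zCenter L (G 0) (G 1) (G (-1))) ⊔ Hs = G 0 := by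
    apply Submodule.eq_of_le_of_finrank_le (sup_le hZleG0 hHsG0)
    have hsum := Submodule.finrank_sup_add_finrank_inf_eq
      (zCenter L (G 0) (G 1) (G (-1))) Hs
    rw [hZHs] at hsum
    have hbot : Module.finrank ℂ (⊥ : Submodule ℂ L) = 0 := finrank_bot ℂ L
    omega
  have hTop : (zCenter L (G 0) (G 1) (G (-1)) : Submodule ℂ L) ⊔ L'a.toSubmodule = ⊤ := by
    refine le_antisymm le_top ?_
    rw [← hsup]
    refine iSup_le fun i => ?_
    by_cases h : i = 0
    · subst h
      calc G 0 = zCenter L (G 0) (G 1) (G (-1)) ⊔ Hs := hG0eq.symm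
      _ ≤ _ := sup_le_sup_left hHle _
    · have hs := hSle i
      rw [hSne i h] at hs
      exact le_trans hs le_sup_right
  have hZbotL' : (zCenter L (G 0) (G 1) (G (-1)) : Submodule ℂ L) ⊓ L'a.toSubmodule = ⊥ := by
    rw [Submodule.eq_bot_iff]
    intro x hx
    obtain ⟨hxZ, hxL⟩ := Submodule.mem_inf.1 hx
    exact hZHbot x hxZ (hL'G0 ▸ Submodule.mem_inf.2 ⟨hxL, hxZ.1⟩)
  refine ⟨hfinZ, hZcentral, hZbotL', hTop, ?_, ?_, hL'G0, ?_, ?_, ?_, ?_, hLe, hLfr, hef'⟩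
  · -- [x, z] ∈ Z
    intro x z hz
    rw [← lie_skew, hZcentral z hz x, neg_zero]
    exact Submodule.zero_mem _
  · -- L' ideal
    intro x y hy
    let T : Submodule ℂ L :=
      { carrier := {w | ⁅w, y⁆ ∈ L'a}
        add_mem' := fun {a b} ha hb => by
          simp only [Set.mem_setOf_eq] at *
          rw [add_lie]
          exact L'a.add_mem ha hb
        zero_mem' := by
          simp only [Set.mem_setOf_eq, zero_lie]
          exact L'a.zero_mem
        smul_mem' := fun c a ha => by
          simp only [Set.mem_setOf_eq] at *
          rw [smul_lie]
          exact L'a.smul_mem c ha }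
    have hT : (⊤ : Submodule ℂ L) ≤ T := by
      rw [← hTop]
      refine sup_le ?_ ?_
      · intro z hz
        show ⁅z, y⁆ ∈ L'a
        rw [hZcentral z hz y]
        exact L'a.zero_mem
      · intro w hw
        show ⁅w, y⁆ ∈ L'a
        exact L'a.lie_mem hw hy
    exact hT Submodule.mem_top
  · -- ⨆ (L' ⊓ G i) = L'
    apply le_antisymm
    · exact iSup_le fun i => inf_le_left
    · calc L'a.toSubmodule = ⨆ k, S k := hL'eq
      _ ≤ ⨆ i, L'a.toSubmodule ⊓ G i :=
        iSup_le fun i => le_trans (le_inf (hSle i) (hSG i))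
          (le_iSup (fun i => L'a.toSubmodule ⊓ G i) i)
  · -- generated by local part
    apply le_antisymm
    · rw [LieSubalgebra.lieSpan_le]
      rintro z ((hz | hz) | hz)
      · exact (Submodule.mem_inf.1 hz).1
      · exact (Submodule.mem_inf.1 hz).1
      · exact (Submodule.mem_inf.1 hz).1
    · rw [hL'def, LieSubalgebra.lieSpan_le]
      rintro z (hz | hz)
      · exact LieSubalgebra.subset_lieSpan
          (Or.inr (Submodule.mem_inf.2 ⟨hGpos 1 le_rfl hz, hz⟩))
      · exact LieSubalgebra.subset_lieSpan
          (Or.inl (Or.inl (Submodule.mem_inf.2 ⟨hGneg 1 le_rfl hz, hz⟩)))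
  · -- transitivity, nonnegative side
    intro i hi x hx hb
    have hfy : ∀ j, ⁅x, f j⁆ = 0 := fun j =>
      hb (f j) (Submodule.mem_inf.2 ⟨hGneg 1 le_rfl (hfm j), hfm j⟩)
    rcases (by omega : i = 0 ∨ i = 1 ∨ 2 ≤ i) with h0 | h1 | h2
    · subst h0
      have hxH : x ∈ Hs := hL'G0 ▸ hx
      rw [hHdef] at hxH
      obtain ⟨c, hc⟩ := (Submodule.mem_span_range_iff_exists_fun ℂ).1 hxH
      have hcoef : ∀ j, ∑ i, c i * cartanC A D γ i j = 0 := by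
        intro j
        have hb2 := hfy j
        rw [← hc, sum_lie' Finset.univ (fun i => c i • hLf i) (f j),
          Finset.sum_congr rfl (fun i _ =>
            show ⁅c i • hLf i, f j⁆ = -(c i * cartanC A D γ i j) • f j by
              rw [smul_lie, hLfr i j, smul_smul]; congr 1; ring),
          ← Finset.sum_smul, Finset.sum_neg_distrib] at hb2
        rcases smul_eq_zero.1 hb2 with h | h
        · simpa [neg_eq_zero] using h
        · exact absurd h (hfne j)
      have hctv : (cartanC A D γ)ᵀ *ᵥ c = 0 := by
        funext j
        simp only [Pi.zero_apply]
        rw [hCtv c j]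
        exact hcoef j
      have hc0 := hCinj c hctv
      rw [← hc]
      refine Finset.sum_eq_zero fun i _ => ?_
      rw [show c i = 0 from congrFun hc0 i, zero_smul]
    · subst h1
      have hx1 : x ∈ G 1 := (Submodule.mem_inf.1 hx).2
      obtain ⟨c, hc⟩ := hmemG1 x hx1
      have hcj : ∀ j, c j = 0 := by
        intro j
        have hb2 := hfy j
        rw [← hc, sum_lie' Finset.univ (fun a => c a • e a) (f j),
          Finset.sum_congr rfl (fun a _ =>
            show ⁅c a • e a, f j⁆ = if a = j then c a • hLf a else 0 by
              rw [smul_lie, hef' a j]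
              by_cases haj : a = j
              · rw [if_pos haj, if_pos haj]
              · rw [if_neg haj, if_neg haj, smul_zero])] at hb2
        rw [Finset.sum_ite_eq' Finset.univ j (fun a => c a • hLf a)] at hb2
        simp only [Finset.mem_univ, if_true] at hb2
        rcases smul_eq_zero.1 hb2 with h | h
        · exact h
        · exact absurd h (hLne j)
      rw [← hc]
      exact Finset.sum_eq_zero fun j _ => by rw [hcj j, zero_smul]
    · exact hiv i h2 x (Submodule.mem_inf.1 hx).2 fun y hy => hb y
        (Submodule.mem_inf.2 ⟨hGneg 1 le_rfl hy, hy⟩)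
  · -- transitivity, nonpositive side
    intro i hi x hx hb
    have hey : ∀ j, ⁅x, e j⁆ = 0 := fun j =>
      hb (e j) (Submodule.mem_inf.2 ⟨hGpos 1 le_rfl (hem j), hem j⟩)
    rcases (by omega : i = 0 ∨ i = -1 ∨ i ≤ -2) with h0 | h1 | h2
    · subst h0
      have hxH : x ∈ Hs := hL'G0 ▸ hx
      rw [hHdef] at hxH
      obtain ⟨c, hc⟩ := (Submodule.mem_span_range_iff_exists_fun ℂ).1 hxH
      have hcoef : ∀ j, ∑ i, c i * cartanC A D γ i j = 0 := by
        intro j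
        have hb2 := hey j
        rw [← hc, sum_lie' Finset.univ (fun i => c i • hLf i) (e j),
          Finset.sum_congr rfl (fun i _ =>
            show ⁅c i • hLf i, e j⁆ = (c i * cartanC A D γ i j) • e j by
              rw [smul_lie, hLe i j, smul_smul]),
          ← Finset.sum_smul] at hb2
        rcases smul_eq_zero.1 hb2 with h | h
        · exact h
        · exact absurd h (hene j)
      have hctv : (cartanC A D γ)ᵀ *ᵥ c = 0 := by
        funext j
        simp only [Pi.zero_apply]
        rw [hCtv c j]
        exact hcoef j
      have hc0 := hCinj c hctv
      rw [← hc]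
      refine Finset.sum_eq_zero fun i _ => ?_
      rw [show c i = 0 from congrFun hc0 i, zero_smul]
    · subst h1
      have hx1 : x ∈ G (-1) := (Submodule.mem_inf.1 hx).2
      obtain ⟨c, hc⟩ := hmemGm1 x hx1
      have hcj : ∀ j, c j = 0 := by
        intro j
        have hb2 := hey j
        rw [← hc, sum_lie' Finset.univ (fun a => c a • f a) (e j),
          Finset.sum_congr rfl (fun a _ =>
            show ⁅c a • f a, e j⁆ = if a = j then -(c a • hLf j) else 0 by
              rw [smul_lie, ← lie_skew, hef' j a, ← smul_neg]
              by_cases haj : a = j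
              · rw [if_pos haj, if_pos ((by rw [haj]) : j = a), haj]
              · rw [if_neg haj, if_neg (fun hja => haj hja.symm), neg_zero, smul_zero]),
          Finset.sum_ite_eq' Finset.univ j (fun a => -(c a • hLf j))] at hb2
        simp only [Finset.mem_univ, if_true, neg_eq_zero] at hb2
        rcases smul_eq_zero.1 hb2 with h | h
        · exact h
        · exact absurd h (hLne j)
      rw [← hc]
      exact Finset.sum_eq_zero fun j _ => by rw [hcj j, zero_smul]
    · exact hv i h2 x (Submodule.mem_inf.1 hx).2 fun y hy => hb y
        (Submodule.mem_inf.2 ⟨hGpos 1 le_rfl hy, hy⟩)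




end
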